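/- arXiv:2410.24006 — 2 statements merged into one kernel-verified Lean document; each statement's English description precedes it below -/
import Mathlib

section
/- Let d ≥ 1 be a natural number and ξ ∈ (0,1). Let γ_d denote the standard Gaussian measure on d-dimensional Euclidean space, i.e. the product over Fin d of the real Gaussian measure with mean 0 and variance 1. Then the γ_d-measure of the set {x : ‖x‖ ≤ C_ξ} is at least 1 − ξ, where C_ξ := √(2d + 4√(d·log(1/ξ)) + 4·log(1/ξ)) and ‖·‖ is the Euclidean (ℓ₂) norm. -/
open MeasureTheory ProbabilityTheory Real
open scoped ENNReal NNReal

lemma gpdf_mul (x : ℝ) : gaussianPDFReal 0 1 x * Real.exp (x^2/4)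
    = (Real.sqrt (2*π))⁻¹ * Real.exp (-(4:ℝ)⁻¹ * x^2) := by
  simp only [gaussianPDFReal, NNReal.coe_one, mul_one, sub_zero]
  rw [mul_assoc, ← Real.exp_add]
  ring_nf

lemma intA : Integrable (fun x => Real.exp (x^2/4)) (gaussianReal 0 1) := by
  rw [gaussianReal_of_var_ne_zero 0 one_ne_zero,
    integrable_withDensity_iff (measurable_gaussianPDF 0 1)
      (Filter.Eventually.of_forall fun x => ENNReal.ofReal_lt_top)]
  have : ∀ x : ℝ, Real.exp (x^2/4) * (gaussianPDF 0 1 x).toReal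
      = (Real.sqrt (2*π))⁻¹ * Real.exp (-(4:ℝ)⁻¹ * x^2) := by
    intro x
    rw [gaussianPDF_def, ENNReal.toReal_ofReal (gaussianPDFReal_nonneg 0 1 x), mul_comm, gpdf_mul]
  simp_rw [this]
  exact (integrable_exp_neg_mul_sq (by norm_num)).const_mul _

lemma valA : ∫ x, Real.exp (x^2/4) ∂(gaussianReal 0 1) = Real.sqrt 2 := by
  rw [gaussianReal_of_var_ne_zero 0 one_ne_zero]
  have h : gaussianPDF 0 1 = fun x => ((Real.toNNReal (gaussianPDFReal 0 1 x) : ℝ≥0) : ℝ≥0∞) :=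
    rfl
  rw [h, integral_withDensity_eq_integral_smul (measurable_gaussianPDFReal 0 1).real_toNNReal]
  have : ∀ x : ℝ, (Real.toNNReal (gaussianPDFReal 0 1 x)) • Real.exp (x^2/4)
      = (Real.sqrt (2*π))⁻¹ * Real.exp (-(4:ℝ)⁻¹ * x^2) := by
    intro x
    rw [NNReal.smul_def, Real.coe_toNNReal _ (gaussianPDFReal_nonneg 0 1 x), smul_eq_mul,
      gpdf_mul]
  simp_rw [this, integral_const_mul, integral_gaussian]
  rw [show π / (4:ℝ)⁻¹ = 2^2 * π by ring, Real.sqrt_mul (by norm_num : (0:ℝ) ≤ 2^2) π,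
    Real.sqrt_sq (by norm_num : (0:ℝ) ≤ 2)]
  field_simp
  ring_nf
  rw [Real.sqrt_mul pi_pos.le 2, mul_assoc, Real.mul_self_sqrt (by norm_num : (0:ℝ) ≤ 2)]

lemma valB (d : ℕ) : ∫ x : Fin d → ℝ, Real.exp ((∑ i, x i ^ 2) / 4)
    ∂(Measure.pi fun _ : Fin d => gaussianReal 0 1) = Real.sqrt 2 ^ d := by
  letI : MeasureSpace ℝ := ⟨gaussianReal 0 1⟩
  haveI : IsProbabilityMeasure (volume : Measure ℝ) :=
    inferInstanceAs (IsProbabilityMeasure (gaussianReal 0 1))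
  haveI : SigmaFinite (volume : Measure ℝ) := inferInstance
  have hμ : (Measure.pi fun _ : Fin d => gaussianReal 0 1) = (volume : Measure (Fin d → ℝ)) :=
    rfl
  rw [hμ]
  simp_rw [Finset.sum_div, Real.exp_sum]
  erw [MeasureTheory.integral_fintype_prod_eq_pow (ι := Fin d) (fun x : ℝ => Real.exp (x^2/4)) (μ := volume), Fintype.card_fin]
  rw [show (∫ x : ℝ, Real.exp (x^2/4)) = ∫ x, Real.exp (x^2/4) ∂(gaussianReal 0 1) from rfl, valA]

lemma intB (d : ℕ) : Integrable (fun x : Fin d → ℝ => Real.exp ((∑ i, x i ^ 2) / 4))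
    (Measure.pi fun _ : Fin d => gaussianReal 0 1) := by
  letI : MeasureSpace ℝ := ⟨gaussianReal 0 1⟩
  haveI : IsProbabilityMeasure (volume : Measure ℝ) :=
    inferInstanceAs (IsProbabilityMeasure (gaussianReal 0 1))
  haveI : SigmaFinite (volume : Measure ℝ) := inferInstance
  have hμ : (Measure.pi fun _ : Fin d => gaussianReal 0 1) = (volume : Measure (Fin d → ℝ)) :=
    rfl
  rw [hμ]
  simp_rw [Finset.sum_div, Real.exp_sum]
  exact Integrable.fintype_prod (f := fun _ (x : ℝ) => Real.exp (x^2/4)) (fun i => intA)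

/-- The standard Gaussian measure on `EuclideanSpace ℝ (Fin d)`, i.e. the `d`-fold product of
the one-dimensional Gaussian measure with mean `0` and variance `1`, transported to the
Euclidean space with its `ℓ₂` norm. -/
noncomputable def stdGaussianE (d : ℕ) : Measure (EuclideanSpace ℝ (Fin d)) :=
  (Measure.pi fun _ : Fin d => gaussianReal 0 1).map
    (MeasurableEquiv.toLp 2 (Fin d → ℝ))

/-- With probability at least `1 - ξ`, the Euclidean norm of a `d`-dimensional standard
Gaussian vector is at most `C_ξ := √(2d + 4√(d·log(1/ξ)) + 4·log(1/ξ))`. -/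
theorem stdGaussian_norm_le_with_high_probability
    (d : ℕ) (hd : 1 ≤ d) (ξ : ℝ) (hξ : ξ ∈ Set.Ioo (0 : ℝ) 1) :
    ENNReal.ofReal (1 - ξ) ≤
      stdGaussianE d {x : EuclideanSpace ℝ (Fin d) |
        ‖x‖ ≤ Real.sqrt (2 * d + 4 * Real.sqrt (d * Real.log (1 / ξ)) + 4 * Real.log (1 / ξ))} := by
  obtain ⟨hξ0, hξ1⟩ := hξ
  set t : ℝ := Real.log (1 / ξ) with ht_def
  have ht : 0 < t := Real.log_pos (by rw [lt_div_iff₀ hξ0]; linarith)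
  set C2 : ℝ := 2 * d + 4 * Real.sqrt (d * t) + 4 * t with hC2_def
  have hC2 : 0 ≤ C2 := by positivity
  set μ : Measure (Fin d → ℝ) := Measure.pi fun _ : Fin d => gaussianReal 0 1 with hμ_def
  haveI : IsProbabilityMeasure μ := by rw [hμ_def]; infer_instance
  -- rewrite the measure of the set as μ of a set in the pi space
  have hSmeas : MeasurableSet {x : EuclideanSpace ℝ (Fin d) | ‖x‖ ≤ Real.sqrt C2} :=
    (isClosed_le continuous_norm continuous_const).measurableSet
  have hmap : stdGaussianE d {x : EuclideanSpace ℝ (Fin d) | ‖x‖ ≤ Real.sqrt C2}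
      = μ {y : Fin d → ℝ | Real.sqrt (∑ i, y i ^ 2) ≤ Real.sqrt C2} := by
    rw [stdGaussianE, Measure.map_apply (MeasurableEquiv.measurable _) hSmeas]
    congr 1
    ext y
    simp only [Set.mem_preimage, Set.mem_setOf_eq]
    have hnorm : ‖(MeasurableEquiv.toLp 2 (Fin d → ℝ)) y‖
        = Real.sqrt (∑ i, y i ^ 2) := by
      rw [EuclideanSpace.norm_eq]
      congr 1
      refine Finset.sum_congr rfl fun i _ => ?_
      rw [Real.norm_eq_abs, sq_abs]
      rfl
    rw [hnorm]
  rw [hmap]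
  -- Markov bound on the complement
  set A : Set (Fin d → ℝ) := {y | Real.sqrt (∑ i, y i ^ 2) ≤ Real.sqrt C2} with hA_def
  have hAmeas : MeasurableSet A := by
    refine measurableSet_le ?_ measurable_const
    exact (Real.continuous_sqrt.comp (by fun_prop)).measurable
  have hcompl : μ Aᶜ ≤ ENNReal.ofReal ξ := by
    have hsub : Aᶜ ⊆ {y : Fin d → ℝ |
        ENNReal.ofReal (Real.exp (C2 / 4)) ≤ ENNReal.ofReal (Real.exp ((∑ i, y i ^ 2) / 4))} := by
      intro y hy
      simp only [hA_def, Set.mem_compl_iff, Set.mem_setOf_eq, not_le] at hy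
      have h1 : C2 ≤ ∑ i, y i ^ 2 := by
        by_contra h
        exact absurd (Real.sqrt_le_sqrt (le_of_not_ge h)) (not_le.mpr hy)
      exact ENNReal.ofReal_le_ofReal (Real.exp_le_exp.mpr (by linarith))
    have hmarkov := mul_meas_ge_le_lintegral₀
      (μ := μ) (f := fun y : Fin d → ℝ => ENNReal.ofReal (Real.exp ((∑ i, y i ^ 2) / 4)))
      (by exact (ENNReal.measurable_ofReal.comp (by fun_prop)).aemeasurable)
      (ENNReal.ofReal (Real.exp (C2 / 4)))
    have hlint : ∫⁻ y, ENNReal.ofReal (Real.exp ((∑ i, y i ^ 2) / 4)) ∂μ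
        = ENNReal.ofReal (Real.sqrt 2 ^ d) := by
      rw [← ofReal_integral_eq_lintegral_ofReal (intB d)
        (Filter.Eventually.of_forall fun y => (Real.exp_pos _).le), valB d]
    rw [hlint] at hmarkov
    have hkey : Real.sqrt 2 ^ d ≤ Real.exp (C2 / 4) * ξ := by
      have hlog2 : Real.log 2 < 0.6931471808 := Real.log_two_lt_d9
      have hsq2 : Real.sqrt 2 ^ d = Real.exp (d * (Real.log 2 / 2)) := by
        rw [← Real.log_sqrt (by norm_num : (0:ℝ) ≤ 2), ← Real.log_pow, Real.exp_log (by positivity)]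
      have hxi : ξ = Real.exp (-t) := by
        rw [ht_def, Real.log_div one_ne_zero (ne_of_gt hξ0), Real.log_one, zero_sub, neg_neg,
          Real.exp_log hξ0]
      rw [hsq2, hxi, ← Real.exp_add, Real.exp_le_exp]
      have hsqrt : 0 ≤ Real.sqrt (d * t) := Real.sqrt_nonneg _
      have hd1 : (1:ℝ) ≤ d := by exact_mod_cast hd
      rw [hC2_def]
      nlinarith [Real.log_pos (by norm_num : (1:ℝ) < 2)]
    calc μ Aᶜ ≤ μ {y : Fin d → ℝ |
        ENNReal.ofReal (Real.exp (C2 / 4)) ≤ ENNReal.ofReal (Real.exp ((∑ i, y i ^ 2) / 4))} :=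
          measure_mono hsub
      _ ≤ ENNReal.ofReal ξ := by
          rw [← ENNReal.mul_le_mul_iff_right (a := ENNReal.ofReal (Real.exp (C2 / 4)))
            (by simp [Real.exp_pos]) ENNReal.ofReal_ne_top]
          refine hmarkov.trans ?_
          rw [← ENNReal.ofReal_mul (Real.exp_pos _).le]
          exact ENNReal.ofReal_le_ofReal hkey
  -- conclude
  have h1 : μ Aᶜ = 1 - μ A := by
    rw [measure_compl hAmeas (measure_ne_top μ A), measure_univ]
  rw [h1] at hcompl
  have h2 : (1 : ℝ≥0∞) ≤ μ A + ENNReal.ofReal ξ := by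
    rw [add_comm]; exact tsub_le_iff_right.mp hcompl
  have h3 : ENNReal.ofReal (1 - ξ) = 1 - ENNReal.ofReal ξ := by
    rw [← ENNReal.ofReal_one, ← ENNReal.ofReal_sub _ hξ0.le]
  rw [h3]
  exact tsub_le_iff_right.mpr h2
end

section
/- Let β : ℕ → ℝ satisfy 0 < β_t < 1 for all t ≥ 1, and define ᾱ_t := ∏_{s=1}^{t} (1 − β_s). Fix x₀ ∈ ℝ and define probability measures on ℝ recursively by μ_0 := the Dirac measure at x₀ and μ_t := μ_{t−1}.bind (fun x => Gaussian measure with mean √(1 − β_t)·x and variance β_t). Then for every t ≥ 1, μ_t equals the Gaussian measure with mean √(ᾱ_t)·x₀ and variance 1 − ᾱ_t. -/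
open MeasureTheory ProbabilityTheory Real Finset

open scoped NNReal ENNReal


lemma pdf_factor (v w : ℝ≥0) (hv : v ≠ 0) (hw : w ≠ 0) (c m y x : ℝ) :
    gaussianPDFReal m v x * gaussianPDFReal (c * x) w y
      = gaussianPDFReal (c * m) (⟨c ^ 2, sq_nonneg c⟩ * v + w) y *
        gaussianPDFReal ((m * w + c * y * v) / (c ^ 2 * v + w)) (v * w / (⟨c ^ 2, sq_nonneg c⟩ * v + w)) x := by
  have hV : (0:ℝ) < v := lt_of_le_of_ne v.coe_nonneg (by exact_mod_cast hv.symm)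
  have hW : (0:ℝ) < w := lt_of_le_of_ne w.coe_nonneg (by exact_mod_cast hw.symm)
  have hD : (0:ℝ) < c ^ 2 * v + w := by positivity
  have hDc : ((⟨c ^ 2, sq_nonneg c⟩ * v + w : ℝ≥0) : ℝ) = c ^ 2 * v + w := by
    push_cast; rfl
  have huc : ((v * w / (⟨c ^ 2, sq_nonneg c⟩ * v + w) : ℝ≥0) : ℝ) = v * w / (c ^ 2 * v + w) := by
    rw [NNReal.coe_div, hDc]; push_cast; rfl
  simp only [gaussianPDFReal, hDc, huc]
  rw [mul_mul_mul_comm, mul_mul_mul_comm ((√(2 * π * (c^2 * (v:ℝ) + w)))⁻¹), ← Real.exp_add,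
    ← Real.exp_add, ← mul_inv, ← mul_inv, ← Real.sqrt_mul (by positivity),
    ← Real.sqrt_mul (by positivity)]
  congr 2
  · field_simp
  · field_simp
    ring

lemma measurable_gaussianReal_mean (w : ℝ≥0) : Measurable fun m : ℝ => gaussianReal m w := by
  by_cases hw : w = 0
  · simpa [hw, gaussianReal_zero_var] using Measure.measurable_dirac
  · refine Measure.measurable_of_measurable_coe _ fun s hs => ?_
    simp only [gaussianReal_apply _ hw s]
    have hF : Measurable fun p : ℝ × ℝ => gaussianPDF p.1 w p.2 := by
      apply Measurable.ennreal_ofReal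
      have : Continuous fun p : ℝ × ℝ => gaussianPDFReal p.1 w p.2 := by
        unfold gaussianPDFReal; fun_prop
      exact this.measurable
    exact hF.lintegral_prod_right'

lemma gaussianReal_bind (m : ℝ) (v w : ℝ≥0) (hw : w ≠ 0) (c : ℝ) :
    (gaussianReal m v).bind (fun x => gaussianReal (c * x) w)
      = gaussianReal (c * m) (⟨c ^ 2, sq_nonneg c⟩ * v + w) := by
  have hf : Measurable fun x : ℝ => gaussianReal (c * x) w :=
    (measurable_gaussianReal_mean w).comp (measurable_const_mul c)
  by_cases hv : v = 0
  · rw [hv, gaussianReal_zero_var, Measure.dirac_bind hf]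
    erw [mul_zero, zero_add]
  -- nondegenerate case
  have hV : (0:ℝ) < v := lt_of_le_of_ne v.coe_nonneg (fun h => hv (by exact_mod_cast h.symm))
  have hW : (0:ℝ) < w := lt_of_le_of_ne w.coe_nonneg (fun h => hw (by exact_mod_cast h.symm))
  set D : ℝ≥0 := ⟨c ^ 2, sq_nonneg c⟩ * v + w with hDdef
  have hD : D ≠ 0 := by
    intro h
    exact hw (by simpa using (add_eq_zero.mp h).2)
  set u : ℝ≥0 := v * w / D with hudef
  have hu : u ≠ 0 := by
    rw [hudef]
    intro h
    rcases div_eq_zero_iff.mp h with h' | h'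
    · rcases mul_eq_zero.mp h' with h'' | h'' <;> [exact hv h''; exact hw h'']
    · exact hD h'
  ext s hs
  have hg : Measurable fun a : ℝ => (gaussianReal (c * a) w) s :=
    (Measure.measurable_coe hs).comp hf
  rw [Measure.bind_apply hs hf.aemeasurable, gaussianReal_of_var_ne_zero m hv,
    lintegral_withDensity_eq_lintegral_mul _ (measurable_gaussianPDF m v) hg]
  simp only [Pi.mul_apply]
  calc ∫⁻ x, gaussianPDF m v x * gaussianReal (c * x) w s
      = ∫⁻ x, ∫⁻ y in s, gaussianPDF m v x * gaussianPDF (c * x) w y := by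
        refine lintegral_congr fun x => ?_
        rw [gaussianReal_apply _ hw s, lintegral_const_mul _ (measurable_gaussianPDF _ w)]
    _ = ∫⁻ y in s, ∫⁻ x, gaussianPDF m v x * gaussianPDF (c * x) w y := by
        refine lintegral_lintegral_swap ?_
        apply Measurable.aemeasurable
        refine Measurable.mul (f := fun p : ℝ × ℝ => gaussianPDF m v p.1)
          (g := fun p : ℝ × ℝ => gaussianPDF (c * p.1) w p.2) ?_ ?_
        · exact (measurable_gaussianPDF m v).comp measurable_fst
        · apply Measurable.ennreal_ofReal
          have : Continuous fun p : ℝ × ℝ => gaussianPDFReal (c * p.1) w p.2 := by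
            unfold gaussianPDFReal; fun_prop
          exact this.measurable
    _ = ∫⁻ y in s, gaussianPDF (c * m) D y := by
        refine lintegral_congr fun y => ?_
        simp only [gaussianPDF]
        calc ∫⁻ x, ENNReal.ofReal (gaussianPDFReal m v x) *
                ENNReal.ofReal (gaussianPDFReal (c * x) w y)
            = ∫⁻ x, ENNReal.ofReal (gaussianPDFReal (c * m) D y) *
                ENNReal.ofReal (gaussianPDFReal ((m * w + c * y * v) / (c ^ 2 * v + w)) u x) := by
              refine lintegral_congr fun x => ?_
              rw [← ENNReal.ofReal_mul (gaussianPDFReal_nonneg _ _ _),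
                ← ENNReal.ofReal_mul (gaussianPDFReal_nonneg _ _ _),
                pdf_factor v w hv hw c m y x]
          _ = ENNReal.ofReal (gaussianPDFReal (c * m) D y) := by
              rw [lintegral_const_mul _ (measurable_gaussianPDFReal _ _).ennreal_ofReal,
                lintegral_gaussianPDFReal_eq_one _ hu, mul_one]
    _ = gaussianReal (c * m) D s := (gaussianReal_apply _ hD s).symm

/-- Equation (6) of the paper: starting from a Dirac mass at `x₀` and iterating the DDPM
forward step `x_t = √(1−β_t)·x_{t−1} + √(β_t)·ε_t` (i.e. binding with the Gaussian kernel
`N(√(1−β_t)·x, β_t)`), the distribution at time `t ≥ 1` is the Gaussian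
`N(√(ᾱ_t)·x₀, 1 − ᾱ_t)` where `ᾱ_t := ∏_{s=1}^t (1 − β_s)`. -/
theorem ddpm_forward_marginal_gaussian
    (β : ℕ → ℝ) (hβ : ∀ t, 1 ≤ t → 0 < β t ∧ β t < 1)
    (x₀ : ℝ) (μ : ℕ → Measure ℝ)
    (h0 : μ 0 = Measure.dirac x₀)
    (hrec : ∀ t, 1 ≤ t → μ t = (μ (t - 1)).bind fun x =>
      gaussianReal (Real.sqrt (1 - β t) * x) (Real.toNNReal (β t))) :
    ∀ t, 1 ≤ t →
      μ t = gaussianReal (Real.sqrt (∏ s ∈ Finset.Icc 1 t, (1 - β s)) * x₀)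
        (Real.toNNReal (1 - ∏ s ∈ Finset.Icc 1 t, (1 - β s))) := by
  -- basic facts about the product
  have hα_pos : ∀ t, 0 < ∏ s ∈ Finset.Icc 1 t, (1 - β s) := by
    intro t
    refine Finset.prod_pos fun s hs => ?_
    have := hβ s (Finset.mem_Icc.mp hs).1
    linarith [this.2]
  have hα_le : ∀ t, ∏ s ∈ Finset.Icc 1 t, (1 - β s) ≤ 1 := by
    intro t
    refine Finset.prod_le_one (fun s hs => ?_) (fun s hs => ?_)
    · have := hβ s (Finset.mem_Icc.mp hs).1
      linarith [this.2]
    · have := hβ s (Finset.mem_Icc.mp hs).1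
      linarith [this.1]
  intro t ht
  induction t, ht using Nat.le_induction with
  | base =>
    have hf : Measurable fun x : ℝ => gaussianReal (Real.sqrt (1 - β 1) * x)
        (Real.toNNReal (β 1)) := by
      exact (measurable_gaussianReal_mean _).comp (measurable_const_mul _)
    rw [hrec 1 le_rfl]
    simp only [Nat.sub_self, h0]
    rw [Measure.dirac_bind hf]
    have h1 : ∏ s ∈ Finset.Icc 1 1, (1 - β s) = 1 - β 1 := by simp
    rw [h1]
    congr 1
    ring_nf
  | succ t ht IH =>
    have hβt := hβ (t + 1) (by omega)
    have hw : Real.toNNReal (β (t + 1)) ≠ 0 := by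
      simp [Real.toNNReal_eq_zero, not_le, hβt.1]
    have hprod : ∏ s ∈ Finset.Icc 1 (t + 1), (1 - β s)
        = (∏ s ∈ Finset.Icc 1 t, (1 - β s)) * (1 - β (t + 1)) :=
      Finset.prod_Icc_succ_top (by omega) _
    have h1β : (0:ℝ) ≤ 1 - β (t + 1) := by linarith [hβt.2]
    rw [hrec (t + 1) (by omega)]
    simp only [Nat.add_sub_cancel]
    rw [IH, gaussianReal_bind]
    · congr 1
      · rw [hprod, Real.sqrt_mul (le_of_lt (hα_pos t)), ← mul_assoc,
          mul_comm (Real.sqrt (1 - β (t + 1)))]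
      · refine NNReal.coe_injective ?_
        push_cast
        erw [NNReal.coe_mul, NNReal.coe_mk]
        rw [Real.coe_toNNReal _ (by linarith [hα_le t]),
          Real.coe_toNNReal _ (le_of_lt hβt.1),
          Real.coe_toNNReal _ (by rw [hprod]; nlinarith [hα_pos t, hα_le t]),
          Real.sq_sqrt h1β, hprod]
        ring
    · exact hw
end
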